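/- Let 2/3 < ν < 4/5 and define S_SG(ζ) := tan((ζ + iπν)/(2i)) / tan((ζ − iπν)/(2i)). Then, in the physical strip {ζ ∈ ℂ : 0 < Im ζ < π}, the function S_SG is meromorphic with exactly two poles, located at ζ = iπν and ζ = iπ(1 − ν), and both poles are simple; at every other point of the strip S_SG is holomorphic. -/

import Mathlib

set_option maxHeartbeats 1000000


open Complex Filter Topology

/-- The sine-Gordon breather–breather (b₁b₁) scattering function. -/
noncomputable def SSG (ν : ℝ) (ζ : ℂ) : ℂ :=
  Complex.tan ((ζ + Complex.I * (Real.pi : ℂ) * (ν : ℂ)) / (2 * Complex.I)) /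
  Complex.tan ((ζ - Complex.I * (Real.pi : ℂ) * (ν : ℂ)) / (2 * Complex.I))

lemma two_I_ne : (2 * Complex.I : ℂ) ≠ 0 := by
  simp [Complex.I_ne_zero]

/-- If `f` has a nonzero derivative `d` at `p` and `f p = 0`, then
`(z - p) / f z → d⁻¹`. -/
lemma tendsto_sub_div_of_hasDerivAt {f : ℂ → ℂ} {p d : ℂ}
    (hf : HasDerivAt f d p) (h0 : f p = 0) (hd : d ≠ 0) :
    Filter.Tendsto (fun z : ℂ => (z - p) / f z) (𝓝[≠] p) (𝓝 d⁻¹) := by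
  have h := (hasDerivAt_iff_tendsto_slope.mp hf).inv₀ hd
  refine h.congr fun z => ?_
  simp [slope_def_field, h0, inv_div]

lemma analyticAt_tan {z : ℂ} (h : Complex.cos z ≠ 0) :
    AnalyticAt ℂ Complex.tan z := by
  have : Complex.tan = fun w => Complex.sin w / Complex.cos w :=
    funext fun w => Complex.tan_eq_sin_div_cos w
  rw [this]
  exact (Complex.differentiable_sin.analyticAt z).div
    (Complex.differentiable_cos.analyticAt z) h

/-- in the physical strip 0 < Im ζ < π, S_SG is holomorphic away from
the two points iπν and iπ(1 − ν), and at each of these two points it has a simple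
pole (the limit of (ζ − p)·S_SG(ζ) exists and is nonzero). -/
theorem SSG_poles_in_strip (ν : ℝ) (h1 : 2/3 < ν) (h2 : ν < 4/5) :
    (∀ ζ : ℂ, 0 < ζ.im → ζ.im < Real.pi →
      ζ ≠ Complex.I * (Real.pi : ℂ) * (ν : ℂ) →
      ζ ≠ Complex.I * (Real.pi : ℂ) * ((1 - ν : ℝ) : ℂ) →
      AnalyticAt ℂ (SSG ν) ζ) ∧
    (∃ r : ℂ, r ≠ 0 ∧ Filter.Tendsto
      (fun ζ : ℂ => (ζ - Complex.I * (Real.pi : ℂ) * (ν : ℂ)) * SSG ν ζ)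
      (𝓝[≠] (Complex.I * (Real.pi : ℂ) * (ν : ℂ))) (𝓝 r)) ∧
    (∃ r : ℂ, r ≠ 0 ∧ Filter.Tendsto
      (fun ζ : ℂ => (ζ - Complex.I * (Real.pi : ℂ) * ((1 - ν : ℝ) : ℂ)) * SSG ν ζ)
      (𝓝[≠] (Complex.I * (Real.pi : ℂ) * ((1 - ν : ℝ) : ℂ))) (𝓝 r)) := by
  have hπ : (0:ℝ) < Real.pi := Real.pi_pos
  set π' : ℂ := (Real.pi : ℂ) with hπ'
  -- some numeric facts about ν
  have hν0 : (0:ℝ) < ν := by linarith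
  have hν1 : ν < 1 := by linarith
  refine ⟨?_, ?_, ?_⟩
  · -- analyticity away from the two poles
    intro ζ him0 him1 hne1 hne2
    have hcosA : Complex.cos ((ζ + Complex.I * π' * ν) / (2 * Complex.I)) ≠ 0 := by
      intro h
      rw [Complex.cos_eq_zero_iff] at h
      obtain ⟨k, hk⟩ := h
      rw [div_eq_iff two_I_ne] at hk
      have hζ : ζ = (((2*(k:ℝ)+1)*Real.pi - Real.pi*ν : ℝ) : ℂ) * Complex.I := by
        push_cast
        linear_combination hk
      rw [hζ] at him0 him1
      simp only [Complex.mul_I_im, Complex.ofReal_re] at him0 him1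
      have hb1 : (0:ℤ) ≤ k := by
        by_contra hb
        push_neg at hb
        have hb' : k ≤ -1 := by omega
        have : (k:ℝ) ≤ -1 := by exact_mod_cast hb'
        nlinarith
      have hb2 : k ≤ 0 := by
        by_contra hb
        push_neg at hb
        have : (1:ℝ) ≤ (k:ℝ) := by exact_mod_cast hb
        nlinarith
      have hk0 : k = 0 := le_antisymm hb2 hb1
      apply hne2
      rw [hζ, hk0]
      push_cast
      ring
    have hcosB : Complex.cos ((ζ - Complex.I * π' * ν) / (2 * Complex.I)) ≠ 0 := by
      intro h
      rw [Complex.cos_eq_zero_iff] at h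
      obtain ⟨k, hk⟩ := h
      rw [div_eq_iff two_I_ne] at hk
      have hζ : ζ = (((2*(k:ℝ)+1)*Real.pi + Real.pi*ν : ℝ) : ℂ) * Complex.I := by
        push_cast
        linear_combination hk
      rw [hζ] at him0 him1
      simp only [Complex.mul_I_im, Complex.ofReal_re] at him0 him1
      have hb1 : (0:ℤ) ≤ k := by
        by_contra hb
        push_neg at hb
        have hb' : k ≤ -1 := by omega
        have : (k:ℝ) ≤ -1 := by exact_mod_cast hb'
        nlinarith
      have hb2 : k < 0 := by
        by_contra hb
        push_neg at hb
        have : (0:ℝ) ≤ (k:ℝ) := by exact_mod_cast hb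
        nlinarith
      omega
    have htanB : Complex.tan ((ζ - Complex.I * π' * ν) / (2 * Complex.I)) ≠ 0 := by
      intro h
      rw [Complex.tan_eq_zero_iff] at h
      obtain ⟨k, hk⟩ := h
      rw [eq_comm, div_eq_iff two_I_ne] at hk
      have hζ : ζ = (((k:ℝ)*Real.pi + Real.pi*ν : ℝ) : ℂ) * Complex.I := by
        push_cast
        linear_combination hk
      rw [hζ] at him0 him1
      simp only [Complex.mul_I_im, Complex.ofReal_re] at him0 him1
      have hb1 : (0:ℤ) ≤ k := by
        by_contra hb
        push_neg at hb
        have hb' : k ≤ -1 := by omega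
        have : (k:ℝ) ≤ -1 := by exact_mod_cast hb'
        nlinarith
      have hb2 : k ≤ 0 := by
        by_contra hb
        push_neg at hb
        have : (1:ℝ) ≤ (k:ℝ) := by exact_mod_cast hb
        nlinarith
      have hk0 : k = 0 := le_antisymm hb2 hb1
      apply hne1
      rw [hζ, hk0]
      push_cast
      ring
    have haffA : AnalyticAt ℂ (fun z : ℂ => (z + Complex.I * π' * ν) / (2 * Complex.I)) ζ :=
      (analyticAt_id.add analyticAt_const).div analyticAt_const two_I_ne
    have haffB : AnalyticAt ℂ (fun z : ℂ => (z - Complex.I * π' * ν) / (2 * Complex.I)) ζ :=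
      (analyticAt_id.sub analyticAt_const).div analyticAt_const two_I_ne
    have hA : AnalyticAt ℂ
        (Complex.tan ∘ fun z : ℂ => (z + Complex.I * π' * ν) / (2 * Complex.I)) ζ :=
      AnalyticAt.comp (analyticAt_tan hcosA) haffA
    have hB : AnalyticAt ℂ
        (Complex.tan ∘ fun z : ℂ => (z - Complex.I * π' * ν) / (2 * Complex.I)) ζ :=
      AnalyticAt.comp (analyticAt_tan hcosB) haffB
    exact hA.div hB htanB
  · -- simple pole at iπν
    set p : ℂ := Complex.I * π' * ν with hp
    have hAp : (p + Complex.I * π' * ν) / (2 * Complex.I) = (Real.pi * ν : ℝ) := by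
      rw [div_eq_iff two_I_ne]
      push_cast
      ring
    have hBp : (p - Complex.I * π' * ν) / (2 * Complex.I) = 0 := by
      rw [div_eq_zero_iff]
      left; ring
    have hcosπν : Complex.cos ((Real.pi * ν : ℝ) : ℂ) ≠ 0 := by
      intro h
      rw [Complex.cos_eq_zero_iff] at h
      obtain ⟨k, hk⟩ := h
      have hk' : Real.pi * ν = (2*(k:ℝ)+1)*Real.pi/2 := by exact_mod_cast hk
      have hb1 : (0:ℤ) < k := by
        have : (0:ℝ) < (k:ℝ) := by nlinarith
        exact_mod_cast this
      have hb2 : k < 1 := by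
        have : (k:ℝ) < 1 := by nlinarith
        exact_mod_cast this
      omega
    have htanπν : Complex.tan ((Real.pi * ν : ℝ) : ℂ) ≠ 0 := by
      intro h
      rw [Complex.tan_eq_zero_iff] at h
      obtain ⟨k, hk⟩ := h
      have hk' : (k:ℝ)*Real.pi/2 = Real.pi * ν := by exact_mod_cast hk
      have hb1 : (1:ℤ) < k := by
        have : (1:ℝ) < (k:ℝ) := by nlinarith
        exact_mod_cast this
      have hb2 : k < 2 := by
        have : (k:ℝ) < 2 := by nlinarith
        exact_mod_cast this
      omega
    refine ⟨Complex.tan ((Real.pi * ν : ℝ) : ℂ) * (2 * Complex.I), ?_, ?_⟩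
    · exact mul_ne_zero htanπν two_I_ne
    · -- factor 1: tan of numerator argument, continuous
      have fac1 : Filter.Tendsto
          (fun ζ : ℂ => Complex.tan ((ζ + Complex.I * π' * ν) / (2 * Complex.I)))
          (𝓝[≠] p) (𝓝 (Complex.tan ((Real.pi * ν : ℝ) : ℂ))) := by
        have haffc : ContinuousAt (fun z : ℂ => (z + Complex.I * π' * ν) / (2 * Complex.I)) p :=
          (continuousAt_id.add continuousAt_const).div_const _
        have htc : ContinuousAt Complex.tan ((p + Complex.I * π' * ν) / (2 * Complex.I)) := by
          rw [hAp]; exact Complex.continuousAt_tan.mpr hcosπν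
        have hc : ContinuousAt
            (Complex.tan ∘ fun z : ℂ => (z + Complex.I * π' * ν) / (2 * Complex.I)) p :=
          ContinuousAt.comp htc haffc
        have := hc.tendsto
        simp only [Function.comp_apply] at this
        rw [hAp] at this
        exact this.mono_left nhdsWithin_le_nhds
      -- factor 2: (ζ - p) / tan(B ζ) → 2I
      have hder : HasDerivAt
          (fun ζ : ℂ => Complex.tan ((ζ - Complex.I * π' * ν) / (2 * Complex.I)))
          ((2 * Complex.I)⁻¹) p := by
        have haff : HasDerivAt (fun ζ : ℂ => (ζ - Complex.I * π' * ν) / (2 * Complex.I))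
            (1 / (2 * Complex.I)) p :=
          ((hasDerivAt_id p).sub_const _).div_const _
        have htan : HasDerivAt Complex.tan
            (1 / Complex.cos ((p - Complex.I * π' * ν) / (2 * Complex.I)) ^ 2)
            ((p - Complex.I * π' * ν) / (2 * Complex.I)) := by
          apply Complex.hasDerivAt_tan
          rw [hBp]
          simp
        have := htan.comp p haff
        rw [hBp] at this
        simp at this
        refine this.congr_deriv ?_
        rw [mul_inv, Complex.inv_I]
        ring
      have fac2 : Filter.Tendsto
          (fun ζ : ℂ => (ζ - p) / Complex.tan ((ζ - Complex.I * π' * ν) / (2 * Complex.I)))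
          (𝓝[≠] p) (𝓝 (2 * Complex.I)) := by
        have h0 : Complex.tan ((p - Complex.I * π' * ν) / (2 * Complex.I)) = 0 := by
          rw [hBp]; simp [Complex.tan_zero]
        have := tendsto_sub_div_of_hasDerivAt hder h0 (inv_ne_zero two_I_ne)
        rw [inv_inv] at this
        exact this
      refine (fac1.mul fac2).congr fun ζ => ?_
      simp only [SSG]
      ring
  · -- simple pole at iπ(1-ν)
    set p : ℂ := Complex.I * π' * ((1 - ν : ℝ) : ℂ) with hp
    have hAp : (p + Complex.I * π' * ν) / (2 * Complex.I) = ((Real.pi / 2 : ℝ) : ℂ) := by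
      rw [hp, div_eq_iff two_I_ne]
      push_cast
      ring
    have hBp : (p - Complex.I * π' * ν) / (2 * Complex.I)
        = ((Real.pi * (1 - 2*ν) / 2 : ℝ) : ℂ) := by
      rw [hp, div_eq_iff two_I_ne]
      push_cast
      ring
    have hcosc : Complex.cos ((Real.pi * (1 - 2*ν) / 2 : ℝ) : ℂ) ≠ 0 := by
      intro h
      rw [Complex.cos_eq_zero_iff] at h
      obtain ⟨k, hk⟩ := h
      have hk' : Real.pi * (1 - 2*ν) / 2 = (2*(k:ℝ)+1)*Real.pi/2 := by exact_mod_cast hk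
      have hb1 : (-1:ℤ) < k := by
        have : (-1:ℝ) < (k:ℝ) := by nlinarith
        exact_mod_cast this
      have hb2 : k < 0 := by
        have : (k:ℝ) < 0 := by nlinarith
        exact_mod_cast this
      omega
    have htanc : Complex.tan ((Real.pi * (1 - 2*ν) / 2 : ℝ) : ℂ) ≠ 0 := by
      intro h
      rw [Complex.tan_eq_zero_iff] at h
      obtain ⟨k, hk⟩ := h
      have hk' : (k:ℝ)*Real.pi/2 = Real.pi * (1 - 2*ν) / 2 := by exact_mod_cast hk
      have hb1 : (-1:ℤ) < k := by
        have : (-1:ℝ) < (k:ℝ) := by nlinarith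
        exact_mod_cast this
      have hb2 : k < 0 := by
        have : (k:ℝ) < 0 := by nlinarith
        exact_mod_cast this
      omega
    refine ⟨(-(2 * Complex.I)) * (Complex.tan ((Real.pi * (1 - 2*ν) / 2 : ℝ) : ℂ))⁻¹, ?_, ?_⟩
    · exact mul_ne_zero (neg_ne_zero.mpr two_I_ne) (inv_ne_zero htanc)
    · -- factor 2: (tan(B ζ))⁻¹, continuous and nonzero
      have fac2 : Filter.Tendsto
          (fun ζ : ℂ => (Complex.tan ((ζ - Complex.I * π' * ν) / (2 * Complex.I)))⁻¹)
          (𝓝[≠] p) (𝓝 ((Complex.tan ((Real.pi * (1 - 2*ν) / 2 : ℝ) : ℂ))⁻¹)) := by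
        have haffc : ContinuousAt (fun z : ℂ => (z - Complex.I * π' * ν) / (2 * Complex.I)) p :=
          (continuousAt_id.sub continuousAt_const).div_const _
        have htc : ContinuousAt Complex.tan ((p - Complex.I * π' * ν) / (2 * Complex.I)) := by
          rw [hBp]; exact Complex.continuousAt_tan.mpr hcosc
        have hc : ContinuousAt
            (Complex.tan ∘ fun z : ℂ => (z - Complex.I * π' * ν) / (2 * Complex.I)) p :=
          ContinuousAt.comp htc haffc
        have := hc.tendsto
        simp only [Function.comp_apply] at this
        rw [hBp] at this
        exact (this.inv₀ htanc).mono_left nhdsWithin_le_nhds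
      -- factor 1a: sin(A ζ) → 1
      have fac1a : Filter.Tendsto
          (fun ζ : ℂ => Complex.sin ((ζ + Complex.I * π' * ν) / (2 * Complex.I)))
          (𝓝[≠] p) (𝓝 1) := by
        have haffc : ContinuousAt (fun z : ℂ => (z + Complex.I * π' * ν) / (2 * Complex.I)) p :=
          (continuousAt_id.add continuousAt_const).div_const _
        have hc : ContinuousAt
            (Complex.sin ∘ fun z : ℂ => (z + Complex.I * π' * ν) / (2 * Complex.I)) p :=
          ContinuousAt.comp Complex.continuous_sin.continuousAt haffc
        have := hc.tendsto
        simp only [Function.comp_apply] at this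
        rw [hAp] at this
        simp only [← Complex.ofReal_sin, Real.sin_pi_div_two, Complex.ofReal_one] at this
        exact this.mono_left nhdsWithin_le_nhds
      -- factor 1b: (ζ - p)/cos(A ζ) → -2I
      have hder : HasDerivAt
          (fun ζ : ℂ => Complex.cos ((ζ + Complex.I * π' * ν) / (2 * Complex.I)))
          (-(2 * Complex.I)⁻¹) p := by
        have haff : HasDerivAt (fun ζ : ℂ => (ζ + Complex.I * π' * ν) / (2 * Complex.I))
            (1 / (2 * Complex.I)) p :=
          ((hasDerivAt_id p).add_const _).div_const _
        have hcos : HasDerivAt Complex.cos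
            (-Complex.sin ((p + Complex.I * π' * ν) / (2 * Complex.I)))
            ((p + Complex.I * π' * ν) / (2 * Complex.I)) := Complex.hasDerivAt_cos _
        have := hcos.comp p haff
        rw [hAp] at this
        simp only [← Complex.ofReal_sin, Real.sin_pi_div_two, Complex.ofReal_one] at this
        refine this.congr_deriv ?_
        ring
      have fac1b : Filter.Tendsto
          (fun ζ : ℂ => (ζ - p) / Complex.cos ((ζ + Complex.I * π' * ν) / (2 * Complex.I)))
          (𝓝[≠] p) (𝓝 (-(2 * Complex.I))) := by
        have h0 : Complex.cos ((p + Complex.I * π' * ν) / (2 * Complex.I)) = 0 := by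
          rw [hAp]
          simp [← Complex.ofReal_cos]
        have := tendsto_sub_div_of_hasDerivAt hder h0
          (neg_ne_zero.mpr (inv_ne_zero two_I_ne))
        rw [inv_neg, inv_inv] at this
        exact this
      have := (fac1a.mul fac1b).mul fac2
      rw [one_mul] at this
      refine this.congr fun ζ => ?_
      simp only [SSG, Complex.tan_eq_sin_div_cos]
      ring
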